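/- Suppose w ∈ C²(B) ∩ C(closure B) is a positive solution of -Δw = λ|x|^α(w+1)^p in the unit ball B, with w = 0 on ∂B, where λ > 0, α ≥ 0, p > 1. Let λ_{1,α} > 0 be the first eigenvalue of -Δφ = λ|x|^α φ on B with zero Dirichlet data, with positive eigenfunction φ₁. Then λ·p < λ_{1,α}. -/

import Mathlib

open Metric

open Set in
lemma second_deriv_nonneg_of_localMin {h : ℝ → ℝ} (hh : ContDiffAt ℝ 2 h 0)
    (hmin : IsLocalMin h 0) : 0 ≤ deriv (deriv h) 0 := by
  by_contra hneg
  push_neg at hneg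
  obtain ⟨u, hu, hcd⟩ := hh.contDiffOn le_rfl (by simp)
  obtain ⟨δ₀, hδ₀, hball⟩ := Metric.mem_nhds_iff.1 hu
  set s : Set ℝ := Metric.ball (0:ℝ) δ₀ with hs
  have hsopen : IsOpen s := Metric.isOpen_ball
  have hcd2 : ContDiffOn ℝ 2 h s := hcd.mono hball
  have hd1 : ContDiffOn ℝ 1 (deriv h) s :=
    hcd2.deriv_of_isOpen hsopen (m := 1) (by norm_num)
  have hd2cont : ContinuousOn (deriv (deriv h)) s :=
    (hd1.deriv_of_isOpen hsopen (m := 0) (by norm_num)).continuousOn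
  have h0s : (0:ℝ) ∈ s := by simp [hs, hδ₀]
  have hca : ContinuousAt (deriv (deriv h)) 0 :=
    hd2cont.continuousAt (hsopen.mem_nhds h0s)
  obtain ⟨δ₁, hδ₁, hneg'⟩ := Metric.eventually_nhds_iff.1
    (hca.eventually_lt continuousAt_const hneg)
  obtain ⟨δ₂, hδ₂, hminball⟩ := Metric.eventually_nhds_iff.1 hmin
  set δ : ℝ := min δ₀ (min δ₁ δ₂) / 2 with hδdef
  have hδpos : 0 < δ := by positivity
  have hmin0 : min δ₀ (min δ₁ δ₂) ≤ δ₀ := min_le_left _ _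
  have hmin1 : min δ₀ (min δ₁ δ₂) ≤ δ₁ := (min_le_right _ _).trans (min_le_left _ _)
  have hmin2 : min δ₀ (min δ₁ δ₂) ≤ δ₂ := (min_le_right _ _).trans (min_le_right _ _)
  have hIccs : Icc (0:ℝ) δ ⊆ s := by
    intro t ht
    simp only [hs, Metric.mem_ball, Real.dist_eq, sub_zero]
    rw [abs_of_nonneg ht.1]; linarith [ht.2]
  have hanti : StrictAntiOn (deriv h) (Icc 0 δ) := by
    apply strictAntiOn_of_deriv_neg (convex_Icc 0 δ)
      (hd1.continuousOn.mono hIccs)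
    intro t ht
    rw [interior_Icc] at ht
    apply hneg'
    rw [Real.dist_eq, sub_zero, abs_of_nonneg ht.1.le]; linarith [ht.2]
  have hd0 : deriv h 0 = 0 := hmin.deriv_eq_zero
  have hanti2 : StrictAntiOn h (Icc 0 δ) := by
    apply strictAntiOn_of_deriv_neg (convex_Icc 0 δ)
      (hcd2.continuousOn.mono hIccs)
    intro t ht
    rw [interior_Icc] at ht
    have := hanti (left_mem_Icc.2 hδpos.le) ⟨ht.1.le, ht.2.le⟩ ht.1
    linarith [hd0 ▸ this]
  have hlt : h δ < h 0 := hanti2 (left_mem_Icc.2 hδpos.le) (right_mem_Icc.2 hδpos.le) hδpos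
  have hge : h 0 ≤ h δ := by
    apply hminball
    rw [Real.dist_eq, sub_zero, abs_of_nonneg hδpos.le]; linarith
  linarith

/-- Laplacian of a real function on ℝ^N: sum of second partial derivatives. -/
noncomputable def laplacian {N : ℕ} (f : EuclideanSpace ℝ (Fin N) → ℝ)
    (x : EuclideanSpace ℝ (Fin N)) : ℝ :=
  ∑ i : Fin N,
    fderiv ℝ (fun y => fderiv ℝ f y (EuclideanSpace.single i 1)) x
      (EuclideanSpace.single i 1)

lemma dir_second_deriv_nonneg {N : ℕ} {g : EuclideanSpace ℝ (Fin N) → ℝ}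
    {x0 : EuclideanSpace ℝ (Fin N)} (hg : ContDiffAt ℝ 2 g x0)
    (hmin : IsLocalMin g x0) (e : EuclideanSpace ℝ (Fin N)) :
    0 ≤ fderiv ℝ (fun y => fderiv ℝ g y e) x0 e := by
  set L : ℝ → EuclideanSpace ℝ (Fin N) := fun t => x0 + t • e with hLdef
  have hL0 : L 0 = x0 := by simp [hLdef]
  have hLd : ∀ t : ℝ, HasDerivAt L e t := by
    intro t
    simpa [hLdef] using ((hasDerivAt_id t).smul_const e).const_add x0
  have hLc : Continuous L := by continuity
  set f : ℝ → ℝ := g ∘ L with hfdef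
  have hfC2 : ContDiffAt ℝ 2 f 0 := by
    apply ContDiffAt.comp
    · rw [hL0]; exact hg
    · exact (contDiff_const.add (contDiff_id.smul contDiff_const)).contDiffAt
  have hfmin : IsLocalMin f 0 := by
    have := hmin
    rw [← hL0] at this
    exact this.comp_continuous hLc.continuousAt
  obtain ⟨u, hu, hcd⟩ := hg.contDiffOn le_rfl (by simp)
  obtain ⟨δ₀, hδ₀, hball⟩ := Metric.mem_nhds_iff.1 hu
  have hcd2 : ContDiffOn ℝ 2 g (ball x0 δ₀) := hcd.mono hball
  have hEv : ∀ᶠ t in nhds (0:ℝ), deriv f t = fderiv ℝ g (L t) e := by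
    have hpre : L ⁻¹' (ball x0 δ₀) ∈ nhds (0:ℝ) := by
      apply hLc.continuousAt.preimage_mem_nhds
      rw [hL0]; exact isOpen_ball.mem_nhds (mem_ball_self hδ₀)
    filter_upwards [hpre] with t ht
    have hdg : DifferentiableAt ℝ g (L t) :=
      (hcd2.contDiffAt (isOpen_ball.mem_nhds ht)).differentiableAt (by norm_num)
    exact (hdg.hasFDerivAt.comp_hasDerivAt t (hLd t)).deriv
  have hdiff2 : DifferentiableAt ℝ (fun y => fderiv ℝ g y e) x0 := by
    have h1 : DifferentiableAt ℝ (fderiv ℝ g) x0 :=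
      (hg.fderiv_right (m := 1) (by norm_num)).differentiableAt (by norm_num)
    exact h1.clm_apply (differentiableAt_const e)
  have hkey : deriv (deriv f) 0 = fderiv ℝ (fun y => fderiv ℝ g y e) x0 e := by
    rw [Filter.EventuallyEq.deriv_eq hEv]
    have : HasDerivAt (fun t => fderiv ℝ g (L t) e)
        (fderiv ℝ (fun y => fderiv ℝ g y e) x0 e) 0 :=
      hdiff2.hasFDerivAt.comp_hasDerivAt_of_eq (0:ℝ) (hLd 0) hL0.symm
    exact this.deriv
  rw [← hkey]
  exact second_deriv_nonneg_of_localMin hfC2 hfmin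

lemma laplacian_add_mul {N : ℕ} {f g : EuclideanSpace ℝ (Fin N) → ℝ}
    {s : Set (EuclideanSpace ℝ (Fin N))} (hs : IsOpen s)
    (hf : ContDiffOn ℝ 2 f s) (hg : ContDiffOn ℝ 2 g s) (b : ℝ)
    {x : EuclideanSpace ℝ (Fin N)} (hx : x ∈ s) :
    laplacian (fun y => f y + b * g y) x = laplacian f x + b * laplacian g x := by
  unfold laplacian
  rw [Finset.mul_sum, ← Finset.sum_add_distrib]
  apply Finset.sum_congr rfl
  intro i _
  set e := EuclideanSpace.single (𝕜 := ℝ) i (1:ℝ) with he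
  have hEv : (fun y => fderiv ℝ (fun z => f z + b * g z) y e)
      =ᶠ[nhds x] (fun y => fderiv ℝ f y e + b * fderiv ℝ g y e) := by
    filter_upwards [hs.mem_nhds hx] with y hy
    have hfd : DifferentiableAt ℝ f y :=
      (hf.contDiffAt (hs.mem_nhds hy)).differentiableAt two_ne_zero
    have hgd : DifferentiableAt ℝ g y :=
      (hg.contDiffAt (hs.mem_nhds hy)).differentiableAt two_ne_zero
    have : HasFDerivAt (fun z => f z + b * g z)
        (fderiv ℝ f y + b • fderiv ℝ g y) y :=
      hfd.hasFDerivAt.add (hgd.hasFDerivAt.const_mul b)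
    rw [this.fderiv]
    simp
  have hA : DifferentiableAt ℝ (fun y => fderiv ℝ f y e) x :=
    (((hf.contDiffAt (hs.mem_nhds hx)).fderiv_right (m := 1)
      (by norm_num)).differentiableAt (by norm_num)).clm_apply (differentiableAt_const e)
  have hB : DifferentiableAt ℝ (fun y => fderiv ℝ g y e) x :=
    (((hg.contDiffAt (hs.mem_nhds hx)).fderiv_right (m := 1)
      (by norm_num)).differentiableAt (by norm_num)).clm_apply (differentiableAt_const e)
  rw [Filter.EventuallyEq.fderiv_eq hEv]
  have : HasFDerivAt (fun y => fderiv ℝ f y e + b * fderiv ℝ g y e)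
      (fderiv ℝ (fun y => fderiv ℝ f y e) x + b • fderiv ℝ (fun y => fderiv ℝ g y e) x) x :=
    hA.hasFDerivAt.add (hB.hasFDerivAt.const_mul b)
  rw [this.fderiv]
  simp

lemma laplacian_one_sub_normsq {N : ℕ} (x : EuclideanSpace ℝ (Fin N)) :
    laplacian (fun y : EuclideanSpace ℝ (Fin N) => 1 - ‖y‖^2) x = -(2*N) := by
  unfold laplacian
  have key : ∀ i : Fin N,
      fderiv ℝ (fun y => fderiv ℝ (fun z : EuclideanSpace ℝ (Fin N) => 1 - ‖z‖^2) y
        (EuclideanSpace.single i 1)) x (EuclideanSpace.single i 1) = -2 := by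
    intro i
    set e := EuclideanSpace.single (𝕜 := ℝ) i (1:ℝ) with he
    have he1 : ‖e‖ = 1 := by simp [he]
    have h1 : (fun y : EuclideanSpace ℝ (Fin N) =>
        fderiv ℝ (fun z : EuclideanSpace ℝ (Fin N) => 1 - ‖z‖^2) y e)
        = fun y => (-2 : ℝ) * (innerSL ℝ e y) := by
      funext y
      have hq : HasFDerivAt (fun z : EuclideanSpace ℝ (Fin N) => 1 - ‖z‖^2)
          (0 - 2 • innerSL ℝ y) y :=
        (hasFDerivAt_const (1:ℝ) y).sub ((hasStrictFDerivAt_norm_sq y).hasFDerivAt)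
      rw [hq.fderiv]
      simp only [ContinuousLinearMap.sub_apply, ContinuousLinearMap.zero_apply,
        ContinuousLinearMap.smul_apply, innerSL_apply_apply, smul_eq_mul]
      rw [real_inner_comm]
      ring
    rw [h1]
    have h2 : HasFDerivAt (fun y => (-2 : ℝ) * (innerSL ℝ e y))
        ((-2 : ℝ) • (innerSL ℝ e)) x :=
      (innerSL ℝ e).hasFDerivAt.const_mul (-2)
    rw [h2.fderiv]
    have h3 : (innerSL ℝ e) e = (1:ℝ) := by
      rw [innerSL_apply_apply, real_inner_self_eq_norm_sq, he1]; norm_num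
    rw [ContinuousLinearMap.smul_apply, h3]
    norm_num
  rw [Finset.sum_congr rfl (fun i _ => key i)]
  simp [mul_comm]

open Set in
lemma min_principle {N : ℕ} (hN : 1 ≤ N) {v : EuclideanSpace ℝ (Fin N) → ℝ}
    (hC2 : ContDiffOn ℝ 2 v (ball (0 : EuclideanSpace ℝ (Fin N)) 1))
    (hC0 : ContinuousOn v (closedBall (0 : EuclideanSpace ℝ (Fin N)) 1))
    (hbd : ∀ x ∈ sphere (0 : EuclideanSpace ℝ (Fin N)) 1, 0 ≤ v x)
    (hlap : ∀ x ∈ ball (0 : EuclideanSpace ℝ (Fin N)) 1, laplacian v x ≤ 0) :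
    ∀ x ∈ closedBall (0 : EuclideanSpace ℝ (Fin N)) 1, 0 ≤ v x := by
  intro x hx
  have key : ∀ ε : ℝ, 0 < ε → -ε ≤ v x := by
    intro ε hε
    set q : EuclideanSpace ℝ (Fin N) → ℝ := fun y => 1 - ‖y‖^2 with hqdef
    set g : EuclideanSpace ℝ (Fin N) → ℝ := fun y => v y + ε * q y with hgdef
    have hqC2 : ContDiff ℝ 2 q := contDiff_const.sub (contDiff_norm_sq ℝ)
    have hgC2 : ContDiffOn ℝ 2 g (ball (0 : EuclideanSpace ℝ (Fin N)) 1) :=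
      hC2.add (contDiffOn_const.mul (hqC2.contDiffOn))
    have hgC0 : ContinuousOn g (closedBall (0 : EuclideanSpace ℝ (Fin N)) 1) :=
      hC0.add ((continuous_const.mul hqC2.continuous).continuousOn)
    obtain ⟨x0, hx0K, hx0min⟩ :=
      (isCompact_closedBall (0 : EuclideanSpace ℝ (Fin N)) 1).exists_isMinOn
        ⟨0, mem_closedBall_self zero_le_one⟩ hgC0
    have hgx0 : 0 ≤ g x0 := by
      by_cases hx0 : x0 ∈ ball (0 : EuclideanSpace ℝ (Fin N)) 1
      · exfalso
        have hloc : IsLocalMin g x0 :=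
          hx0min.isLocalMin (Filter.mem_of_superset (isOpen_ball.mem_nhds hx0)
            ball_subset_closedBall)
        have hCAg : ContDiffAt ℝ 2 g x0 := hgC2.contDiffAt (isOpen_ball.mem_nhds hx0)
        have h1 : 0 ≤ laplacian g x0 :=
          Finset.sum_nonneg fun i _ => dir_second_deriv_nonneg hCAg hloc _
        have h2 : laplacian g x0 = laplacian v x0 + ε * (-(2*N)) := by
          rw [hgdef]
          rw [laplacian_add_mul isOpen_ball hC2 (hqC2.contDiffOn) ε hx0,
            laplacian_one_sub_normsq]
        have h3 := hlap x0 hx0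
        have hN' : (1:ℝ) ≤ N := by exact_mod_cast hN
        nlinarith
      · have hsp : x0 ∈ sphere (0 : EuclideanSpace ℝ (Fin N)) 1 := by
          simp only [mem_closedBall, mem_ball, mem_sphere, dist_zero_right] at *
          push_neg at hx0
          linarith
        have hn1 : ‖x0‖ = 1 := by simpa [mem_sphere, dist_zero_right] using hsp
        have : g x0 = v x0 := by simp [hgdef, hqdef, hn1]
        rw [this]
        exact hbd x0 hsp
    have hgle : g x0 ≤ g x := hx0min hx
    have hx1 : ‖x‖ ≤ 1 := by simpa [mem_closedBall, dist_zero_right] using hx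
    have h01 : 0 ≤ 1 - ‖x‖^2 := by nlinarith [norm_nonneg x]
    have h11 : 1 - ‖x‖^2 ≤ 1 := by nlinarith [norm_nonneg x]
    have : 0 ≤ v x + ε * q x := le_trans hgx0 hgle
    simp only [hqdef] at this
    nlinarith
  by_contra hvx
  push_neg at hvx
  have := key (-v x / 2) (by linarith)
  linarith

/-- if w is a positive classical solution of
-Δw = λ|x|^α(w+1)^p in the unit ball with zero boundary data, and λ_{1,α} is
the first eigenvalue of -Δφ = λ|x|^α φ with positive eigenfunction φ₁, then
λ·p < λ_{1,α}. -/
theorem stmt_3 (N : ℕ) (hN : 1 ≤ N) (lam lam1 α p : ℝ)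
    (hlam : 0 < lam) (hlam1 : 0 < lam1) (hα : 0 ≤ α) (hp : 1 < p)
    (w φ₁ : EuclideanSpace ℝ (Fin N) → ℝ)
    -- w is a positive classical solution
    (hwC2 : ContDiffOn ℝ 2 w (ball (0 : EuclideanSpace ℝ (Fin N)) 1))
    (hwC0 : ContinuousOn w (closedBall (0 : EuclideanSpace ℝ (Fin N)) 1))
    (hwpos : ∀ x ∈ ball (0 : EuclideanSpace ℝ (Fin N)) 1, 0 < w x)
    (hweq : ∀ x ∈ ball (0 : EuclideanSpace ℝ (Fin N)) 1,
      -laplacian w x = lam * ‖x‖ ^ α * (w x + 1) ^ p)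
    (hwbd : ∀ x ∈ sphere (0 : EuclideanSpace ℝ (Fin N)) 1, w x = 0)
    -- φ₁ is a positive first eigenfunction with eigenvalue lam1
    (hφC2 : ContDiffOn ℝ 2 φ₁ (ball (0 : EuclideanSpace ℝ (Fin N)) 1))
    (hφC0 : ContinuousOn φ₁ (closedBall (0 : EuclideanSpace ℝ (Fin N)) 1))
    (hφpos : ∀ x ∈ ball (0 : EuclideanSpace ℝ (Fin N)) 1, 0 < φ₁ x)
    (hφeq : ∀ x ∈ ball (0 : EuclideanSpace ℝ (Fin N)) 1,
      -laplacian φ₁ x = lam1 * ‖x‖ ^ α * φ₁ x)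
    (hφbd : ∀ x ∈ sphere (0 : EuclideanSpace ℝ (Fin N)) 1, φ₁ x = 0) :
    lam * p < lam1 := by
  by_contra hcon
  push_neg at hcon
  have h0B : (0 : EuclideanSpace ℝ (Fin N)) ∈ ball (0 : EuclideanSpace ℝ (Fin N)) 1 :=
    mem_ball_self one_pos
  obtain ⟨xM, hxM, hmax⟩ :=
    (isCompact_closedBall (0 : EuclideanSpace ℝ (Fin N)) 1).exists_isMaxOn
      ⟨0, mem_closedBall_self zero_le_one⟩ hφC0
  set M := φ₁ xM with hMdef
  have hMpos : 0 < M := lt_of_lt_of_le (hφpos 0 h0B) (hmax (ball_subset_closedBall h0B))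
  set δ := lam / (lam1 * M) with hδdef
  have hδpos : 0 < δ := by positivity
  have hlamδ : δ * lam1 * M = lam := by
    rw [hδdef]
    field_simp
  have claim : ∀ n : ℕ, ∀ x ∈ closedBall (0 : EuclideanSpace ℝ (Fin N)) 1,
      ((n : ℝ) * δ) * φ₁ x ≤ w x := by
    intro n
    induction n with
    | zero =>
      intro x hxK
      simp only [Nat.cast_zero, zero_mul]
      apply min_principle hN hwC2 hwC0 (fun y hy => le_of_eq (hwbd y hy).symm) _ x hxK
      intro y hy
      have h1 := hweq y hy
      have h2 : (0:ℝ) ≤ lam * ‖y‖ ^ α * (w y + 1) ^ p := by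
        have := hwpos y hy
        positivity
      linarith
    | succ n ih =>
      have hc0 : (0:ℝ) ≤ (n : ℝ) * δ := by positivity
      set c : ℝ := (n : ℝ) * δ with hcdef
      have key : ∀ x ∈ closedBall (0 : EuclideanSpace ℝ (Fin N)) 1,
          0 ≤ w x + (-(c + δ)) * φ₁ x := by
        apply min_principle hN (hwC2.add (contDiffOn_const.mul hφC2))
          (hwC0.add (continuousOn_const.mul hφC0))
        · intro y hy
          rw [hwbd y hy, hφbd y hy]
          simp
        · intro y hy
          rw [laplacian_add_mul isOpen_ball hwC2 hφC2 _ hy]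
          have hlw : laplacian w y = -(lam * ‖y‖ ^ α * (w y + 1) ^ p) := by
            linarith [hweq y hy]
          have hlφ : laplacian φ₁ y = -(lam1 * ‖y‖ ^ α * φ₁ y) := by
            linarith [hφeq y hy]
          rw [hlw, hlφ]
          have hr : (0:ℝ) ≤ ‖y‖ ^ α := Real.rpow_nonneg (norm_nonneg y) α
          have hwy : 0 < w y := hwpos y hy
          have hφy : 0 < φ₁ y := hφpos y hy
          have hφM : φ₁ y ≤ M := hmax (ball_subset_closedBall hy)
          have hwc : c * φ₁ y ≤ w y := ih y (ball_subset_closedBall hy)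
          have hBer : 1 + p * w y ≤ (w y + 1) ^ p := by
            rw [add_comm (w y) 1]
            exact one_add_mul_self_le_rpow_one_add (by linarith) hp.le
          have hmain : (c + δ) * (lam1 * φ₁ y) ≤ lam * (w y + 1) ^ p := by
            have h5 : lam1 * w y ≤ lam * p * w y :=
              mul_le_mul_of_nonneg_right hcon hwy.le
            have h6 : δ * lam1 * φ₁ y ≤ δ * lam1 * M :=
              mul_le_mul_of_nonneg_left hφM (by positivity)
            have h7 : lam * (1 + p * w y) ≤ lam * ((w y + 1) ^ p) :=
              mul_le_mul_of_nonneg_left hBer hlam.le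
            have h8 : lam1 * (c * φ₁ y) ≤ lam1 * w y :=
              mul_le_mul_of_nonneg_left hwc hlam1.le
            nlinarith
          have h9 := mul_le_mul_of_nonneg_left hmain hr
          nlinarith
      intro x hxK
      have h10 := key x hxK
      rw [hcdef] at h10
      push_cast
      linarith
  obtain ⟨n, hn⟩ := exists_nat_gt (w 0 / (δ * φ₁ 0))
  have hφ0 : 0 < φ₁ 0 := hφpos 0 h0B
  have h1 := claim n 0 (mem_closedBall_self zero_le_one)
  have h2 : w 0 < (n : ℝ) * (δ * φ₁ 0) := by
    rw [div_lt_iff₀ (by positivity)] at hn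
    nlinarith
  nlinarith
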